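/- Let M be a model category whose underlying category is locally small, and let W be its class of weak equivalences. Then the localization Ho(M) = M[W⁻¹] of M at W exists as a locally small category; that is, the formal inversion of the weak equivalences has small hom-sets (does not require passage to a larger universe). -/

import Mathlib

/-!
STATEMENT 1: If `M` is a model category whose underlying category is locally small
(hom-types in universe `v`), then the localization `Ho(M) = M[W⁻¹]` at the class `W`
of weak equivalences has `v`-small hom-sets, i.e. it is a locally small category.
-/

universe v u

open CategoryTheory CategoryTheory.Limits

/-- A class of morphisms is stable under retracts: if `f` is a retract of `g`
(in the arrow category) and `g` belongs to the class, then so does `f`. -/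
def CategoryTheory.MorphismProperty.StableUnderRetracts {C : Type u} [Category.{v} C]
    (P : MorphismProperty C) : Prop :=
  ∀ ⦃X Y X' Y' : C⦄ (f : X ⟶ Y) (g : X' ⟶ Y') (i : X ⟶ X') (r : X' ⟶ X)
    (i' : Y ⟶ Y') (r' : Y' ⟶ Y),
    i ≫ r = 𝟙 X → i' ≫ r' = 𝟙 Y → i ≫ g = f ≫ i' → g ≫ r' = r ≫ f → P g → P f

/-- A model category: a category with all small limits and colimits, equipped with
classes of weak equivalences, cofibrations and fibrations satisfying two-out-of-three,
retract closure, the lifting axioms, and the two factorization axioms. -/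
class ModelCategory (C : Type u) [Category.{v} C] where
  [hasLimits : HasLimits C]
  [hasColimits : HasColimits C]
  weq : MorphismProperty C
  cof : MorphismProperty C
  fib : MorphismProperty C
  weq_twoOutOfThree : weq.HasTwoOutOfThreeProperty
  weq_retract : weq.StableUnderRetracts
  cof_retract : cof.StableUnderRetracts
  fib_retract : fib.StableUnderRetracts
  lift_cof_trivFib : ∀ ⦃A B X Y : C⦄ (i : A ⟶ B) (p : X ⟶ Y),
    cof i → weq p → fib p → HasLiftingProperty i p
  lift_trivCof_fib : ∀ ⦃A B X Y : C⦄ (i : A ⟶ B) (p : X ⟶ Y),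
    weq i → cof i → fib p → HasLiftingProperty i p
  factor_trivCof_fib : ∀ ⦃X Y : C⦄ (f : X ⟶ Y),
    ∃ (Z : C) (i : X ⟶ Z) (p : Z ⟶ Y), weq i ∧ cof i ∧ fib p ∧ i ≫ p = f
  factor_cof_trivFib : ∀ ⦃X Y : C⦄ (f : X ⟶ Y),
    ∃ (Z : C) (i : X ⟶ Z) (p : Z ⟶ Y), cof i ∧ weq p ∧ fib p ∧ i ≫ p = f

/-! ### Auxiliary development -/

namespace QuillenAux

open CategoryTheory.MorphismProperty CategoryTheory.Localization

instance (priority := 100) modelHasLimits {C : Type u} [Category.{v} C] [h : ModelCategory C] :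
    HasLimits C := h.hasLimits

instance (priority := 100) modelHasColimits {C : Type u} [Category.{v} C] [h : ModelCategory C] :
    HasColimits C := h.hasColimits

variable {M : Type u} [Category.{v} M] [hM : ModelCategory M]

/-- Fibrant replacement. -/
noncomputable def R (X : M) : M := (hM.factor_trivCof_fib (terminal.from X)).choose

/-- The trivial cofibration `X ⟶ R X`. -/
noncomputable def iR (X : M) : X ⟶ R X :=
  (hM.factor_trivCof_fib (terminal.from X)).choose_spec.choose

/-- The fibration `R X ⟶ ⊤`. -/
noncomputable def pR (X : M) : R X ⟶ ⊤_ M :=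
  (hM.factor_trivCof_fib (terminal.from X)).choose_spec.choose_spec.choose

lemma R_spec (X : M) :
    hM.weq (iR X) ∧ hM.cof (iR X) ∧ hM.fib (pR X) ∧ iR X ≫ pR X = terminal.from X :=
  (hM.factor_trivCof_fib (terminal.from X)).choose_spec.choose_spec.choose_spec

/-- Cofibrant replacement of the fibrant replacement. -/
noncomputable def Qo (X : M) : M := (hM.factor_cof_trivFib (initial.to (R X))).choose

/-- The cofibration `⊥ ⟶ Qo X`. -/
noncomputable def jQ (X : M) : ⊥_ M ⟶ Qo X :=
  (hM.factor_cof_trivFib (initial.to (R X))).choose_spec.choose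

/-- The trivial fibration `Qo X ⟶ R X`. -/
noncomputable def pQ (X : M) : Qo X ⟶ R X :=
  (hM.factor_cof_trivFib (initial.to (R X))).choose_spec.choose_spec.choose

lemma Q_spec (X : M) :
    hM.cof (jQ X) ∧ hM.weq (pQ X) ∧ hM.fib (pQ X) ∧ jQ X ≫ pQ X = initial.to (R X) :=
  (hM.factor_cof_trivFib (initial.to (R X))).choose_spec.choose_spec.choose_spec

lemma isIso_Qmap {X Y : M} (w : X ⟶ Y) (hw : hM.weq w) : IsIso (hM.weq.Q.map w) :=
  hM.weq.Q_inverts w hw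

/-- The canonical isomorphism `L X ≅ L (Qo X)` in the localization. -/
noncomputable def β (X : M) : hM.weq.Q.obj X ≅ hM.weq.Q.obj (Qo X) :=
  haveI := isIso_Qmap (iR X) (R_spec X).1
  haveI := isIso_Qmap (pQ X) (Q_spec X).2.1
  asIso (hM.weq.Q.map (iR X)) ≪≫ (asIso (hM.weq.Q.map (pQ X))).symm

/-- Every morphism of `M` is realized, up to the canonical isomorphisms, by a morphism
between cofibrant-fibrant replacements; weak equivalences are realized by weak
equivalences. -/
lemma exists_rep {X Y : M} (u : X ⟶ Y) :
    ∃ f : Qo X ⟶ Qo Y, (hM.weq u → hM.weq f) ∧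
      hM.weq.Q.map u ≫ (β Y).hom = (β X).hom ≫ hM.weq.Q.map f := by
  haveI := hM.weq_twoOutOfThree
  -- construct `l : R X ⟶ R Y` with `iR X ≫ l = u ≫ iR Y`
  haveI := hM.lift_trivCof_fib (iR X) (pR Y) (R_spec X).1 (R_spec X).2.1 (R_spec Y).2.2.1
  have sq1 : CommSq (u ≫ iR Y) (iR X) (pR Y) (terminal.from (R X)) := ⟨terminal.hom_ext _ _⟩
  set l : R X ⟶ R Y := sq1.lift with hl
  have hl1 : iR X ≫ l = u ≫ iR Y := sq1.fac_left
  -- construct `f : Qo X ⟶ Qo Y` with `f ≫ pQ Y = pQ X ≫ l`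
  haveI := hM.lift_cof_trivFib (jQ X) (pQ Y) (Q_spec X).1 (Q_spec Y).2.1 (Q_spec Y).2.2.1
  have sq2 : CommSq (initial.to (Qo Y)) (jQ X) (pQ Y) (pQ X ≫ l) := ⟨initial.hom_ext _ _⟩
  set f : Qo X ⟶ Qo Y := sq2.lift with hf
  have hf1 : f ≫ pQ Y = pQ X ≫ l := sq2.fac_right
  refine ⟨f, ?_, ?_⟩
  · intro hu
    have hlw : hM.weq l :=
      hM.weq.of_precomp (iR X) l (R_spec X).1 (hl1 ▸ hM.weq.comp_mem u (iR Y) hu (R_spec Y).1)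
    have : hM.weq (pQ X ≫ l) := hM.weq.comp_mem _ _ (Q_spec X).2.1 hlw
    exact hM.weq.of_postcomp f (pQ Y) (Q_spec Y).2.1 (hf1 ▸ this)
  · haveI := isIso_Qmap (pQ X) (Q_spec X).2.1
    haveI := isIso_Qmap (pQ Y) (Q_spec Y).2.1
    have e1 : hM.weq.Q.map u ≫ hM.weq.Q.map (iR Y) = hM.weq.Q.map (iR X) ≫ hM.weq.Q.map l := by
      rw [← hM.weq.Q.map_comp, ← hM.weq.Q.map_comp, hl1]
    have e2 : hM.weq.Q.map f ≫ hM.weq.Q.map (pQ Y) =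
        hM.weq.Q.map (pQ X) ≫ hM.weq.Q.map l := by
      rw [← hM.weq.Q.map_comp, ← hM.weq.Q.map_comp, hf1]
    show hM.weq.Q.map u ≫ hM.weq.Q.map (iR Y) ≫ CategoryTheory.inv (hM.weq.Q.map (pQ Y)) =
      (hM.weq.Q.map (iR X) ≫ CategoryTheory.inv (hM.weq.Q.map (pQ X))) ≫ hM.weq.Q.map f
    rw [← Category.assoc, e1, Category.assoc, Category.assoc]
    congr 1
    rw [IsIso.eq_inv_comp, ← Category.assoc, ← e2, Category.assoc, IsIso.hom_inv_id,
      Category.comp_id]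

/-- Inverses of weak equivalences are also realized by morphisms between
cofibrant-fibrant replacements. -/
lemma exists_inv_rep {X Y : M} (w : X ⟶ Y) (hw : hM.weq w) :
    haveI := isIso_Qmap w hw
    ∃ g : Qo Y ⟶ Qo X,
      CategoryTheory.inv (hM.weq.Q.map w) ≫ (β X).hom = (β Y).hom ≫ hM.weq.Q.map g := by
  haveI := hM.weq_twoOutOfThree
  haveI := isIso_Qmap w hw
  obtain ⟨f, hfw, hcomm⟩ := exists_rep w
  have hf : hM.weq f := hfw hw
  -- factor f = q ≫ p
  obtain ⟨C, q, p, hq_weq, hq_cof, hp_fib, hqp⟩ := hM.factor_trivCof_fib f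
  have hp_weq : hM.weq p := hM.weq.of_precomp q p hq_weq (hqp ▸ hf)
  -- retraction r of q, using fibrancy of Qo X
  haveI := hM.lift_trivCof_fib q (pR X) hq_weq hq_cof (R_spec X).2.2.1
  have sqh : CommSq (pQ X) q (pR X) (terminal.from C) := ⟨terminal.hom_ext _ _⟩
  set h : C ⟶ R X := sqh.lift with hh
  have hh1 : q ≫ h = pQ X := sqh.fac_left
  haveI := hM.lift_trivCof_fib q (pQ X) hq_weq hq_cof (Q_spec X).2.2.1
  have sqr : CommSq (𝟙 (Qo X)) q (pQ X) h := ⟨by rw [Category.id_comp, hh1]⟩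
  set r : C ⟶ Qo X := sqr.lift with hr
  have hr1 : q ≫ r = 𝟙 (Qo X) := sqr.fac_left
  -- section s of p, using cofibrancy of Qo Y
  haveI := hM.lift_cof_trivFib (jQ Y) p (Q_spec Y).1 hp_weq hp_fib
  have sqs : CommSq (initial.to C) (jQ Y) p (𝟙 (Qo Y)) := ⟨initial.hom_ext _ _⟩
  set s : Qo Y ⟶ C := sqs.lift with hs
  have hs1 : s ≫ p = 𝟙 (Qo Y) := sqs.fac_right
  refine ⟨s ≫ r, ?_⟩
  haveI hiq := isIso_Qmap q hq_weq
  haveI hip := isIso_Qmap p hp_weq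
  have hLs : hM.weq.Q.map s ≫ hM.weq.Q.map p = 𝟙 _ := by
    rw [← Functor.map_comp, hs1, CategoryTheory.Functor.map_id]
  have hLq : hM.weq.Q.map q ≫ hM.weq.Q.map r = 𝟙 _ := by
    rw [← Functor.map_comp, hr1, CategoryTheory.Functor.map_id]
  have hs3 : hM.weq.Q.map s = CategoryTheory.inv (hM.weq.Q.map p) :=
    IsIso.eq_inv_of_inv_hom_id hLs
  have hr3 : hM.weq.Q.map r = CategoryTheory.inv (hM.weq.Q.map q) :=
    IsIso.eq_inv_of_hom_inv_id hLq
  have hLf : hM.weq.Q.map f = hM.weq.Q.map q ≫ hM.weq.Q.map p := by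
    rw [← Functor.map_comp, hqp]
  rw [IsIso.inv_comp_eq]
  rw [Functor.map_comp, hs3, hr3, ← Category.assoc, hcomm, hLf]
  simp

/-- The canonical isomorphism, indexed by objects of the localized category. -/
noncomputable def γ (A : hM.weq.Localization) :
    A ≅ hM.weq.Q.obj (Qo ((Construction.objEquiv hM.weq).symm A)) :=
  eqToIso ((Construction.objEquiv hM.weq).apply_symm_apply A).symm ≪≫
    β ((Construction.objEquiv hM.weq).symm A)

lemma γ_Qobj (X : M) : γ (hM.weq.Q.obj X) = β X := by
  apply Iso.ext
  show 𝟙 (hM.weq.Q.obj X) ≫ (β X).hom = (β X).hom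
  exact Category.id_comp _

/-- The property of morphisms of the localization of being realized by a morphism
between cofibrant-fibrant replacements. -/
def P : MorphismProperty hM.weq.Localization := fun A B g =>
  ∃ f : Qo ((Construction.objEquiv hM.weq).symm A) ⟶
      Qo ((Construction.objEquiv hM.weq).symm B),
    g = (γ A).hom ≫ hM.weq.Q.map f ≫ (γ B).inv

instance : (P (M := M)).IsStableUnderComposition where
  comp_mem := by
    rintro A B C g g' ⟨f, hf⟩ ⟨f', hf'⟩
    refine ⟨f ≫ f', ?_⟩
    rw [hf, hf', Functor.map_comp]
    simp

lemma P_top : (P (M := M)) = ⊤ := by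
  apply Construction.morphismProperty_eq_top
  · intro X Y u
    obtain ⟨f, -, hcomm⟩ := exists_rep u
    refine ⟨f, ?_⟩
    rw [γ_Qobj X, γ_Qobj Y, ← Category.assoc]
    exact (Iso.eq_comp_inv _).2 hcomm
  · intro X Y w hw
    haveI := isIso_Qmap w hw
    have hwinv : Construction.wInv w hw = CategoryTheory.inv (hM.weq.Q.map w) :=
      IsIso.eq_inv_of_hom_inv_id (Construction.wIso w hw).hom_inv_id
    obtain ⟨g, hg⟩ := exists_inv_rep w hw
    refine ⟨g, ?_⟩
    rw [hwinv, γ_Qobj X, γ_Qobj Y, ← Category.assoc]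
    exact (Iso.eq_comp_inv _).2 hg

end QuillenAux

/-- Quillen's theorem: the formal inversion `Ho(M) = M[W⁻¹]` of a (locally small)
model category `M` at its weak equivalences is again locally small: its hom-sets
are `v`-small, where `v` is the universe of the hom-types of `M`. -/
theorem homotopyCategory_locallySmall
    {M : Type u} [Category.{v} M] [hM : ModelCategory M] :
    LocallySmall.{v} hM.weq.Localization := by
  refine ⟨fun A B => ?_⟩
  apply small_of_surjective.{v, max u v, v}
    (f := fun (f : QuillenAux.Qo ((Localization.Construction.objEquiv hM.weq).symm A) ⟶
      QuillenAux.Qo ((Localization.Construction.objEquiv hM.weq).symm B)) =>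
      (QuillenAux.γ A).hom ≫ hM.weq.Q.map f ≫ (QuillenAux.γ B).inv)
  intro g
  have hg : QuillenAux.P g := by rw [QuillenAux.P_top]; trivial
  obtain ⟨f, hf⟩ := hg
  exact ⟨f, hf.symm⟩
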